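/- Let c ∈ ℝ² and let f : ℝ² → ℝ² be the rotation by 90° about c, f(x) = c + J(x − c) where J(x₁,x₂) = (−x₂, x₁). Then f maps ℤ² onto ℤ² if and only if c ∈ ℤ² or c ∈ (1/2, 1/2) + ℤ²; i.e., the possible centers of 90°-rotational symmetries of the square tessellation graph are exactly the lattice points and the centers of the unit squares. -/
import Mathlib


/-- The integer lattice `ℤ²` inside `ℝ²` (as `Fin 2 → ℝ`). -/
def intLat : Set (Fin 2 → ℝ) := {x | ∀ i, ∃ n : ℤ, x i = n}

/-- The linear rotation of `ℝ²` by 90° about the origin, `J(x₁,x₂) = (−x₂,x₁)`. -/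
def rot90 : Matrix (Fin 2) (Fin 2) ℝ := !![0, -1; 1, 0]

lemma rot90_mulVec (v : Fin 2 → ℝ) : rot90.mulVec v = ![-(v 1), v 0] := by
  funext i
  fin_cases i <;>
    simp [rot90, Matrix.mulVec, dotProduct, Fin.sum_univ_two]

lemma f_eq (c x : Fin 2 → ℝ) :
    c + rot90.mulVec (x - c) = ![c 0 + c 1 - x 1, c 1 - c 0 + x 0] := by
  rw [rot90_mulVec]
  funext i
  fin_cases i <;> simp <;> ring

lemma mem_intLat {v : Fin 2 → ℝ} (h0 : ∃ n : ℤ, v 0 = n) (h1 : ∃ n : ℤ, v 1 = n) :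
    v ∈ intLat := by
  intro i
  fin_cases i
  · exact h0
  · exact h1

/-- The rotation by 90° about `c`, `f(x) = c + J(x − c)`, maps `ℤ²` onto
`ℤ²` iff `c ∈ ℤ²` or `c ∈ (1/2,1/2) + ℤ²`: the possible centers of 90°-rotational
symmetries of the square tessellation are exactly the lattice points and the centers
of the unit squares. -/
theorem rotation90_center_intLat (c : Fin 2 → ℝ) :
    (fun x => c + rot90.mulVec (x - c)) '' intLat = intLat ↔
      c ∈ intLat ∨ (c - ![1/2, 1/2]) ∈ intLat := by
  constructor
  · intro h
    have h0 : (0 : Fin 2 → ℝ) ∈ intLat := fun i => ⟨0, by simp⟩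
    have ht : c + rot90.mulVec ((0 : Fin 2 → ℝ) - c) ∈ intLat := by
      rw [← h]; exact ⟨0, h0, rfl⟩
    rw [f_eq] at ht
    obtain ⟨m, hm⟩ := ht 0
    obtain ⟨n, hn⟩ := ht 1
    simp at hm hn
    rcases Int.even_or_odd (m + n) with ⟨k, hk⟩ | ⟨k, hk⟩
    · left
      have hk' : (m : ℝ) + n = k + k := by exact_mod_cast hk
      exact mem_intLat ⟨m - k, by push_cast; linarith⟩ ⟨k, by linarith⟩
    · right
      have hk' : (m : ℝ) + n = 2 * k + 1 := by exact_mod_cast hk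
      refine mem_intLat ⟨m - k - 1, ?_⟩ ⟨k, ?_⟩ <;>
        simp only [Pi.sub_apply, Matrix.cons_val_zero, Matrix.cons_val_one,
          Matrix.head_cons] <;> push_cast <;> linarith
  · intro h
    obtain ⟨p, q, hp, hq⟩ : ∃ p q : ℤ, c 0 + c 1 = p ∧ c 1 - c 0 = q := by
      rcases h with h | h
      · obtain ⟨a, ha⟩ := h 0
        obtain ⟨b, hb⟩ := h 1
        exact ⟨a + b, b - a, by push_cast; linarith, by push_cast; linarith⟩
      · obtain ⟨a, ha⟩ := h 0
        obtain ⟨b, hb⟩ := h 1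
        simp only [Pi.sub_apply, Matrix.cons_val_zero, Matrix.cons_val_one,
          Matrix.head_cons] at ha hb
        exact ⟨a + b + 1, b - a, by push_cast; linarith, by push_cast; linarith⟩
    apply Set.eq_of_subset_of_subset
    · rintro y ⟨x, hx, rfl⟩
      simp only [f_eq]
      obtain ⟨a, ha⟩ := hx 0
      obtain ⟨b, hb⟩ := hx 1
      exact mem_intLat ⟨p - b, by push_cast; simp [ha, hb]; linarith⟩
        ⟨q + a, by push_cast; simp [ha, hb]; linarith⟩
    · intro y hy
      obtain ⟨a, ha⟩ := hy 0
      obtain ⟨b, hb⟩ := hy 1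
      refine ⟨![(b : ℝ) - q, (p : ℝ) - a],
        mem_intLat ⟨b - q, by push_cast; simp⟩ ⟨p - a, by push_cast; simp⟩, ?_⟩
      simp only [f_eq]
      funext i
      fin_cases i <;> simp [ha, hb] <;> linarith
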